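/- For real numbers $t \geq 1$, $B \geq 0$, and $0 \leq A \leq C$, the inequality $(A + BC)^t \leq A^t + ((1+B)^t - 1)C^t$ holds. -/

import Mathlib

lemma magic_aux (t d : ℝ) (ht : 1 ≤ t) (hd : 0 ≤ d) :
    MonotoneOn (fun x : ℝ => (x + d) ^ t - x ^ t) (Set.Ici 0) := by
  have hderiv : ∀ x : ℝ, HasDerivAt (fun x : ℝ => (x + d) ^ t - x ^ t)
      (t * (x + d) ^ (t - 1) - t * x ^ (t - 1)) x := by
    intro x
    have h1 : HasDerivAt (fun x : ℝ => (x + d) ^ t) (1 * t * (x + d) ^ (t - 1)) x :=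
      ((hasDerivAt_id x).add_const d).rpow_const (Or.inr ht)
    have h2 : HasDerivAt (fun x : ℝ => x ^ t) (t * x ^ (t - 1)) x :=
      Real.hasDerivAt_rpow_const (Or.inr ht)
    have h3 := h1.sub h2
    simp only [one_mul] at h3
    exact h3
  apply monotoneOn_of_deriv_nonneg (convex_Ici 0)
  · exact (Differentiable.continuous fun x => (hderiv x).differentiableAt).continuousOn
  · exact fun x _ => ((hderiv x).differentiableAt).differentiableWithinAt
  · intro x hx
    rw [interior_Ici] at hx
    rw [(hderiv x).deriv]
    have h0 : (0:ℝ) ≤ x := le_of_lt hx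
    have : x ^ (t - 1) ≤ (x + d) ^ (t - 1) :=
      Real.rpow_le_rpow h0 (by linarith) (by linarith)
    nlinarith

/-- Lemma 5.2 (Magic Inequality): for real `t ≥ 1`, `B ≥ 0`, `0 ≤ A ≤ C`,
`(A + B*C)^t ≤ A^t + ((1+B)^t - 1) * C^t`. -/
theorem magic_inequality (t A B C : ℝ) (ht : 1 ≤ t) (hB : 0 ≤ B)
    (hA : 0 ≤ A) (hAC : A ≤ C) :
    (A + B * C) ^ t ≤ A ^ t + ((1 + B) ^ t - 1) * C ^ t := by
  have hC : (0:ℝ) ≤ C := hA.trans hAC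
  have hd : (0:ℝ) ≤ B * C := mul_nonneg hB hC
  have key := magic_aux t (B * C) ht hd hA hC hAC
  simp only at key
  have hmul : (C + B * C) ^ t = (1 + B) ^ t * C ^ t := by
    rw [← Real.mul_rpow (by linarith) hC]; ring_nf
  nlinarith [key, hmul]
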